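/- Let Θ* be a real symmetric positive-definite n×n matrix, let c > 0, and define the data vector u by u_I = c·det(Θ*_I) for all I ⊆ [n]. Then Θ* maximizes the log-likelihood: for every real symmetric positive-definite n×n matrix Θ, L_u(Θ) ≤ L_u(Θ*). -/

import Mathlib

noncomputable section

/-- The principal minor of `Θ` indexed by the subset `I` (with `det(Θ_∅) = 1`). -/
def principalMinor {ι : Type*} [DecidableEq ι] (Θ : Matrix ι ι ℝ) (I : Finset ι) : ℝ :=
  (Θ.submatrix (fun a : {x // x ∈ I} => (a : ι)) (fun a : {x // x ∈ I} => (a : ι))).det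

/-- The log-likelihood function of the determinantal point process model:
`L_u(Θ) = Σ_I u_I · log det(Θ_I) − (Σ_I u_I) · log det(Θ + Id)`. -/
def logLik {ι : Type*} [Fintype ι] [DecidableEq ι]
    (u : Finset ι → ℝ) (Θ : Matrix ι ι ℝ) : ℝ :=
  (∑ I : Finset ι, u I * Real.log (principalMinor Θ I))
    - (∑ I : Finset ι, u I) * Real.log (Θ + 1).det

open Matrix in
lemma principalMinor_pos {ι : Type*} [Fintype ι] [DecidableEq ι]
    {Θ : Matrix ι ι ℝ} (hΘ : Θ.PosDef) (I : Finset ι) : 0 < principalMinor Θ I := by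
  refine Matrix.PosDef.det_pos (Matrix.PosDef.of_dotProduct_mulVec_pos (hΘ.1.submatrix _) ?_)
  intro x hx
  classical
  set y : ι → ℝ := fun i => if h : i ∈ I then x ⟨i, h⟩ else 0 with hy
  have hy0 : y ≠ 0 := by
    intro h
    apply hx
    funext a
    have := congrFun h a.1
    simpa [hy, a.2] using this
  have hq := hΘ.dotProduct_mulVec_pos hy0
  have hsum : ∀ g : ι → ℝ, ∑ i, y i * g i = ∑ a : {x // x ∈ I}, x a * g ↑a := by
    intro g
    calc ∑ i, y i * g i = ∑ i ∈ I, y i * g i :=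
          (Finset.sum_subset I.subset_univ (fun i _ hi => by simp [hy, hi])).symm
      _ = ∑ a : {x // x ∈ I}, y ↑a * g ↑a := (Finset.sum_coe_sort I _).symm
      _ = ∑ a : {x // x ∈ I}, x a * g ↑a :=
          Finset.sum_congr rfl (fun a _ => by simp [hy, a.2])
  have hrhs : dotProduct (star y) (Θ *ᵥ y)
      = ∑ a : {x // x ∈ I}, x a * ∑ b : {x // x ∈ I}, x b * Θ ↑a ↑b := by
    simp only [star_trivial, dotProduct]
    rw [hsum (Θ *ᵥ y)]
    refine Finset.sum_congr rfl (fun a _ => ?_)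
    congr 1
    calc (Θ *ᵥ y) ↑a = ∑ j, Θ ↑a j * y j := rfl
      _ = ∑ j, y j * Θ ↑a j := by simp [mul_comm]
      _ = ∑ b : {x // x ∈ I}, x b * Θ ↑a ↑b := hsum (Θ ↑a)
  have hlhs : dotProduct (star x)
      ((Θ.submatrix (fun a : {x // x ∈ I} => (a : ι)) (fun a : {x // x ∈ I} => (a : ι))) *ᵥ x)
      = ∑ a : {x // x ∈ I}, x a * ∑ b : {x // x ∈ I}, x b * Θ ↑a ↑b := by
    simp only [star_trivial, dotProduct, Matrix.mulVec, Matrix.submatrix_apply]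
    refine Finset.sum_congr rfl (fun a _ => ?_)
    congr 1
    simp [dotProduct, mul_comm]
  rw [hlhs, ← hrhs]
  exact hq

lemma det_add_one_eq_sum {ι : Type*} [Fintype ι] [DecidableEq ι] (Θ : Matrix ι ι ℝ) :
    (Θ + 1).det = ∑ I : Finset ι, principalMinor Θ I := by
  classical
  have h := MultilinearMap.map_add_univ
    ((Matrix.detRowAlternating : AlternatingMap ℝ (ι → ℝ) ℝ ι).toMultilinearMap)
    (Θ : Matrix ι ι ℝ) (1 : Matrix ι ι ℝ)
  have hdet : (Θ + 1).det
      = ∑ s : Finset ι, Matrix.detRowAlternating (s.piecewise (Θ : ι → ι → ℝ) (1 : Matrix ι ι ℝ)) := h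
  rw [hdet]
  refine Finset.sum_congr rfl (fun s _ => ?_)
  have h1 : Matrix.detRowAlternating (s.piecewise (Θ : ι → ι → ℝ) (1 : Matrix ι ι ℝ))
      = (Matrix.of (s.piecewise (Θ : ι → ι → ℝ) (1 : Matrix ι ι ℝ))).det := rfl
  rw [h1, ← Matrix.det_submatrix_equiv_self (Equiv.sumCompl (· ∈ s))]
  have heq : (Matrix.of (s.piecewise (Θ : ι → ι → ℝ) (1 : Matrix ι ι ℝ))).submatrix
        (Equiv.sumCompl (· ∈ s)) (Equiv.sumCompl (· ∈ s))
      = Matrix.fromBlocks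
          (Θ.submatrix (fun a : {x // x ∈ s} => (a : ι)) (fun a : {x // x ∈ s} => (a : ι)))
          (Θ.submatrix (fun a : {x // x ∈ s} => (a : ι)) (fun a : {x // ¬ x ∈ s} => (a : ι)))
          0 1 := by
    ext i j
    cases i with
    | inl a =>
      cases j with
      | inl b => simp [Finset.piecewise, a.2]
      | inr b => simp [Finset.piecewise, a.2]
    | inr a =>
      cases j with
      | inl b =>
        have hab : (a : ι) ≠ (b : ι) := fun h => a.2 (h ▸ b.2)
        simp [Finset.piecewise, a.2, Matrix.one_apply, hab]
      | inr b =>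
        simp [Finset.piecewise, a.2, Matrix.one_apply, Subtype.ext_iff]
  rw [heq, Matrix.det_fromBlocks_zero₂₁]
  simp [principalMinor]


/-- If the data vector is proportional to the principal minors of a symmetric
positive-definite matrix `Θ*`, then `Θ*` globally maximizes the log-likelihood
over all symmetric positive-definite matrices. -/
theorem logLik_le_of_data_on_model {n : ℕ}
    (Θstar : Matrix (Fin n) (Fin n) ℝ) (hstar : Θstar.PosDef)
    (c : ℝ) (hc : 0 < c) (u : Finset (Fin n) → ℝ)
    (hu : ∀ I, u I = c * principalMinor Θstar I)
    (Θ : Matrix (Fin n) (Fin n) ℝ) (hΘ : Θ.PosDef) :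
    logLik u Θ ≤ logLik u Θstar := by
  classical
  set m : Finset (Fin n) → ℝ := fun I => principalMinor Θ I with hm
  set ms : Finset (Fin n) → ℝ := fun I => principalMinor Θstar I with hms
  have hmpos : ∀ I, 0 < m I := fun I => principalMinor_pos hΘ I
  have hmspos : ∀ I, 0 < ms I := fun I => principalMinor_pos hstar I
  set D : ℝ := ∑ I : Finset (Fin n), m I with hD
  set Ds : ℝ := ∑ I : Finset (Fin n), ms I with hDs
  have hDpos : 0 < D := Finset.sum_pos (fun I _ => hmpos I) ⟨∅, Finset.mem_univ _⟩
  have hDspos : 0 < Ds := Finset.sum_pos (fun I _ => hmspos I) ⟨∅, Finset.mem_univ _⟩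
  have hdet : (Θ + 1).det = D := det_add_one_eq_sum Θ
  have hdets : (Θstar + 1).det = Ds := det_add_one_eq_sum Θstar
  have key : ∑ I : Finset (Fin n), ms I * Real.log (m I * Ds / (ms I * D)) ≤ 0 := by
    calc ∑ I : Finset (Fin n), ms I * Real.log (m I * Ds / (ms I * D))
        ≤ ∑ I : Finset (Fin n), ms I * (m I * Ds / (ms I * D) - 1) :=
          Finset.sum_le_sum fun I _ =>
            mul_le_mul_of_nonneg_left
              (Real.log_le_sub_one_of_pos (div_pos (mul_pos (hmpos I) hDspos) (mul_pos (hmspos I) hDpos))) (hmspos I).le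
      _ = ∑ I : Finset (Fin n), (m I * (Ds / D) - ms I) :=
          Finset.sum_congr rfl fun I _ => by
            have h1 : ms I ≠ 0 := (hmspos I).ne'
            have h2 : D ≠ 0 := hDpos.ne'
            field_simp
      _ = D * (Ds / D) - Ds := by
          rw [Finset.sum_sub_distrib, ← Finset.sum_mul, ← hD, ← hDs]
      _ = 0 := by field_simp; ring
  have hlog : ∀ I : Finset (Fin n), Real.log (m I * Ds / (ms I * D))
      = Real.log (m I) + Real.log Ds - Real.log (ms I) - Real.log D := by
    intro I
    rw [Real.log_div (mul_pos (hmpos I) hDspos).ne' (mul_pos (hmspos I) hDpos).ne',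
      Real.log_mul (hmpos I).ne' hDspos.ne', Real.log_mul (hmspos I).ne' hDpos.ne']
    ring
  have expand : ∑ I : Finset (Fin n), ms I * Real.log (m I * Ds / (ms I * D))
      = (∑ I : Finset (Fin n), ms I * Real.log (m I)) + Ds * Real.log Ds
        - (∑ I : Finset (Fin n), ms I * Real.log (ms I)) - Ds * Real.log D := by
    rw [show (∑ I : Finset (Fin n), ms I * Real.log (m I * Ds / (ms I * D)))
        = ∑ I : Finset (Fin n), (ms I * Real.log (m I) + ms I * Real.log Ds
            - ms I * Real.log (ms I) - ms I * Real.log D) from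
      Finset.sum_congr rfl (fun I _ => by rw [hlog I]; ring)]
    rw [Finset.sum_sub_distrib, Finset.sum_sub_distrib, Finset.sum_add_distrib,
      ← Finset.sum_mul, ← Finset.sum_mul, ← hDs]
  have key2 : (∑ I : Finset (Fin n), ms I * Real.log (m I)) + Ds * Real.log Ds
      - (∑ I : Finset (Fin n), ms I * Real.log (ms I)) - Ds * Real.log D ≤ 0 :=
    expand ▸ key
  simp only [logLik, hu, hdet, hdets]
  have e1 : ∀ (f : Finset (Fin n) → ℝ), ∑ I : Finset (Fin n), c * ms I * f I
      = c * ∑ I : Finset (Fin n), ms I * f I := by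
    intro f
    rw [Finset.mul_sum]
    exact Finset.sum_congr rfl fun I _ => by ring
  have e2 : ∑ I : Finset (Fin n), c * ms I = c * Ds := by
    rw [hDs, Finset.mul_sum]
  rw [e1, e1, e2]
  nlinarith [mul_le_mul_of_nonneg_left key2 hc.le]

end
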